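/- Let U ⊆ ℝ^{n-1} be open, and let X : U → ℝⁿ \ {0} and N : U → ℝⁿ be continuously differentiable maps such that ‖N(u)‖ = 1, ⟨N(u), ∂_α X(u)⟩ = 0 for all α, and ⟨X(u), N(u)⟩ < 0 for all u ∈ U. Define X* = N/(-⟨X,N⟩) and N* = X/‖X‖. Then at every u ∈ U, det(N*, ∂₁X*, …, ∂_{n-1}X*) = (-1)ⁿ / (⟨X*,N*⟩ ⟨X,N⟩ⁿ) · det(N, ∂₁N, …, ∂_{n-1}N), where det(v₀, v₁, …, v_{n-1}) denotes the determinant of the n×n matrix with columns v₀, …, v_{n-1}. -/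

import Mathlib

open Set RealInnerProductSpace

noncomputable section

/-- The determinant of the `n × n` matrix whose columns are `v 0, …, v (n-1)`. -/
def detCols {n : ℕ} (v : Fin n → EuclideanSpace ℝ (Fin n)) : ℝ :=
  Matrix.det (Matrix.of fun i j => v j i)

/-- The partial derivative `∂_α f (u)` of a map between Euclidean spaces. -/
def pderiv' {m n : ℕ} (f : EuclideanSpace ℝ (Fin m) → EuclideanSpace ℝ (Fin n))
    (u : EuclideanSpace ℝ (Fin m)) (α : Fin m) : EuclideanSpace ℝ (Fin n) :=
  fderiv ℝ f u (EuclideanSpace.single α 1)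

lemma inner_eq_sum' {n : ℕ} (x y : EuclideanSpace ℝ (Fin n)) :
    (⟪x, y⟫ : ℝ) = ∑ i, x i * y i := by
  simp [PiLp.inner_apply, RCLike.inner_apply, mul_comm]

/-- The purely linear-algebraic core of the theorem. -/
lemma det_key {m : ℕ} (Xv Nv Xs Ns : EuclideanSpace ℝ (Fin (m + 1)))
    (D Dn : Fin m → EuclideanSpace ℝ (Fin (m + 1))) (s : ℝ) (c : Fin m → ℝ)
    (hs : s ≠ 0)
    (hXs : Xs = (-s)⁻¹ • Nv)
    (hD : ∀ α, D α = (-s)⁻¹ • Dn α + c α • Nv)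
    (hXvD : ∀ α, (⟪Xv, D α⟫ : ℝ) = 0)
    (hXvXs : (⟪Xv, Xs⟫ : ℝ) = -1)
    (hq : (⟪Xs, Ns⟫ : ℝ) * ⟪Xv, Ns⟫ = -1) :
    detCols (Fin.cons Ns D)
      = (-1) ^ (m + 1) / ((⟪Xs, Ns⟫ : ℝ) * s ^ (m + 1)) * detCols (Fin.cons Nv Dn) := by
  classical
  have hns : (-s : ℝ) ≠ 0 := neg_ne_zero.mpr hs
  set q : ℝ := ⟪Xs, Ns⟫ with hqdef
  have hq0 : q ≠ 0 := by
    intro h; rw [h, zero_mul] at hq; norm_num at hq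
  set P : EuclideanSpace ℝ (Fin (m + 1)) := Xs - q • Ns with hP
  -- Claim C : det with first column P vanishes
  have hXvP : (⟪Xv, P⟫ : ℝ) = 0 := by
    rw [hP, inner_sub_right, real_inner_smul_right, hXvXs]
    linear_combination -hq
  have hC : detCols (Fin.cons P D) = 0 := by
    rw [detCols, ← Matrix.exists_vecMul_eq_zero_iff]
    refine ⟨fun i => Xv i, ?_, ?_⟩
    · intro h
      have : Xv = 0 := by ext i; exact congrFun h i
      rw [this] at hXvXs; simp at hXvXs
    · ext j
      have : ∀ w : EuclideanSpace ℝ (Fin (m + 1)), (⟪Xv, w⟫ : ℝ) = 0 →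
          ∑ i, Xv i * w i = 0 := fun w hw => by rw [← inner_eq_sum']; exact hw
      induction j using Fin.cases with
      | zero => simpa [Matrix.vecMul, dotProduct, inner_eq_sum'] using this P hXvP
      | succ α => simpa [Matrix.vecMul, dotProduct, inner_eq_sum'] using this (D α) (hXvD α)
  -- Claim B : linearity in the first column
  have hXsPQ : Xs = q • Ns + P := by rw [hP]; abel
  have hupd : ∀ x : EuclideanSpace ℝ (Fin (m + 1)),
      (Matrix.of fun i j => (Fin.cons x D : Fin (m + 1) → EuclideanSpace ℝ (Fin (m + 1))) j i)
        = (Matrix.of fun i j =>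
            (Fin.cons Ns D : Fin (m + 1) → EuclideanSpace ℝ (Fin (m + 1))) j i).updateCol 0
            (fun i => x i) := by
    intro x
    ext i j
    induction j using Fin.cases with
    | zero => simp [Matrix.updateCol_apply]
    | succ α => simp [Matrix.updateCol_apply, Fin.succ_ne_zero]
  have hB : detCols (Fin.cons Xs D) = q * detCols (Fin.cons Ns D) + detCols (Fin.cons P D) := by
    have e1 : detCols (Fin.cons Xs D) =
        ((Matrix.of fun i j =>
          (Fin.cons Ns D : Fin (m + 1) → EuclideanSpace ℝ (Fin (m + 1))) j i).updateCol 0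
          (fun i => Xs i)).det := by rw [detCols]; exact congrArg Matrix.det (hupd _)
    have e2 : detCols (Fin.cons Ns D) =
        ((Matrix.of fun i j =>
          (Fin.cons Ns D : Fin (m + 1) → EuclideanSpace ℝ (Fin (m + 1))) j i).updateCol 0
          (fun i => Ns i)).det := by rw [detCols]; exact congrArg Matrix.det (hupd _)
    have e3 : detCols (Fin.cons P D) =
        ((Matrix.of fun i j =>
          (Fin.cons Ns D : Fin (m + 1) → EuclideanSpace ℝ (Fin (m + 1))) j i).updateCol 0
          (fun i => P i)).det := by rw [detCols]; exact congrArg Matrix.det (hupd _)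
    rw [e1, e2, e3]
    have hcol : (fun i => Xs i) = (fun i => q * Ns i) + fun i => P i := by
      funext i
      rw [hXsPQ]
      simp
    rw [hcol, Matrix.det_updateCol_add]
    congr 1
    rw [show (fun i => q * Ns i) = q • fun i => Ns i from rfl, Matrix.det_updateCol_smul]
  -- Claim A : relate the two determinants via an upper triangular matrix
  set T : Matrix (Fin (m + 1)) (Fin (m + 1)) ℝ := Matrix.of fun i j =>
    (Fin.cons (if i = 0 then -s else 0)
      (fun α => if i = 0 then -s ^ 2 * c α else if i = α.succ then -s else 0) :
        Fin (m + 1) → ℝ) j with hT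
  have hNv : Nv = (-s) • Xs := by
    rw [hXs, smul_smul, mul_inv_cancel₀ hns, one_smul]
  have hDn : ∀ α, Dn α = (-s) • D α + (-s ^ 2 * c α) • Xs := by
    intro α
    rw [hD α, hXs, smul_add, smul_smul, smul_smul, smul_smul, mul_inv_cancel₀ hns, one_smul]
    have h2 : (-s ^ 2 * c α) * (-s)⁻¹ = s * c α := by field_simp
    rw [h2, add_assoc, ← add_smul]
    have : (-s * c α + s * c α : ℝ) = 0 := by ring
    rw [this, zero_smul, add_zero]
  have hMul : (Matrix.of fun i j =>
      (Fin.cons Nv Dn : Fin (m + 1) → EuclideanSpace ℝ (Fin (m + 1))) j i)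
      = (Matrix.of fun i j =>
          (Fin.cons Xs D : Fin (m + 1) → EuclideanSpace ℝ (Fin (m + 1))) j i) * T := by
    ext i j
    induction j using Fin.cases with
    | zero =>
      simp only [Matrix.mul_apply, Matrix.of_apply, hT, Fin.cons_zero, mul_ite, mul_zero,
        Finset.sum_ite_eq', Finset.mem_univ, if_true]
      rw [hNv]
      simp [mul_comm]
    | succ α =>
      simp only [Matrix.mul_apply, Matrix.of_apply, hT, Fin.cons_succ, Fin.sum_univ_succ,
        Fin.cons_zero, Fin.succ_ne_zero, if_false, if_true, eq_self_iff_true, Fin.succ_inj,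
        mul_ite, mul_zero, Finset.sum_ite_eq', Finset.mem_univ]
      rw [hDn α]
      simp [smul_eq_mul]
      ring
  have htri : T.BlockTriangular id := by
    intro i j hij
    induction j using Fin.cases with
    | zero =>
      have hi : i ≠ 0 := by
        intro h; rw [h] at hij; exact lt_irrefl _ hij
      simp [hT, hi]
    | succ α =>
      have hi0 : i ≠ 0 := Fin.pos_iff_ne_zero.mp (lt_trans (Fin.succ_pos α) hij)
      have hi1 : i ≠ α.succ := (ne_of_gt hij)
      simp [hT, hi0, hi1]
  have hdetT : T.det = (-s) ^ (m + 1) := by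
    rw [Matrix.det_of_upperTriangular htri]
    have hdiag : ∀ i, T i i = -s := by
      intro i
      induction i using Fin.cases with
      | zero => simp [hT]
      | succ α => simp [hT, Fin.succ_ne_zero]
    rw [Finset.prod_congr rfl fun i _ => hdiag i, Finset.prod_const, Finset.card_univ,
      Fintype.card_fin]
  have hA : detCols (Fin.cons Nv Dn) = (-s) ^ (m + 1) * detCols (Fin.cons Xs D) := by
    rw [detCols, hMul, Matrix.det_mul, hdetT, detCols, mul_comm]
  rw [hA, hB, hC, add_zero]
  have h1 : (-s : ℝ) ^ (m + 1) = (-1) ^ (m + 1) * s ^ (m + 1) := by rw [neg_pow]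
  rw [h1]
  have ht : ((-1 : ℝ)) ^ (m + 1) * (-1 : ℝ) ^ (m + 1) = 1 := by
    rw [← pow_add, ← two_mul, pow_mul]; norm_num
  rw [div_mul_eq_mul_div, eq_comm, div_eq_iff (mul_ne_zero hq0 (pow_ne_zero _ hs))]
  linear_combination (s ^ (m + 1) * q * detCols (Fin.cons Ns D)) * ht

/-- With `n = m + 1`: for `C¹` maps `X : U → ℝⁿ \ {0}` and `N : U → ℝⁿ`
with `‖N‖ = 1`, `⟨N, ∂_α X⟩ = 0` and `⟨X, N⟩ < 0` on the open set `U`, setting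
`X* = N/(-⟨X,N⟩)` and `N* = X/‖X‖`, one has
`det(N*, ∂₁X*, …, ∂ₘX*) = (-1)ⁿ/(⟨X*,N*⟩⟨X,N⟩ⁿ) det(N, ∂₁N, …, ∂ₘN)` on `U`. -/
theorem det_tangent_copolar {m : ℕ}
    (U : Set (EuclideanSpace ℝ (Fin m))) (hU : IsOpen U)
    (X N : EuclideanSpace ℝ (Fin m) → EuclideanSpace ℝ (Fin (m + 1)))
    (hX : ContDiffOn ℝ 1 X U) (hN : ContDiffOn ℝ 1 N U)
    (hX0 : ∀ u ∈ U, X u ≠ 0)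
    (hNnorm : ∀ u ∈ U, ‖N u‖ = 1)
    (hOrth : ∀ u ∈ U, ∀ α : Fin m, ⟪N u, pderiv' X u α⟫ = (0 : ℝ))
    (hneg : ∀ u ∈ U, ⟪X u, N u⟫ < (0 : ℝ)) :
    ∀ u ∈ U,
      detCols (Fin.cons (‖X u‖⁻¹ • X u)
          (fun α => pderiv' (fun v => (-(⟪X v, N v⟫ : ℝ))⁻¹ • N v) u α))
        = (-1) ^ (m + 1) /
            ((⟪(-(⟪X u, N u⟫ : ℝ))⁻¹ • N u, ‖X u‖⁻¹ • X u⟫ : ℝ) *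
              (⟪X u, N u⟫ : ℝ) ^ (m + 1)) *
            detCols (Fin.cons (N u) (fun α => pderiv' N u α)) := by
  intro u hu
  have hmem : U ∈ nhds u := hU.mem_nhds hu
  have hXd : DifferentiableAt ℝ X u := (hX.differentiableOn one_ne_zero).differentiableAt hmem
  have hNd : DifferentiableAt ℝ N u := (hN.differentiableOn one_ne_zero).differentiableAt hmem
  have hs0 : (⟪X u, N u⟫ : ℝ) ≠ 0 := ne_of_lt (hneg u hu)
  have hns0 : -(⟪X u, N u⟫ : ℝ) ≠ 0 := neg_ne_zero.mpr hs0
  have hr0 : ‖X u‖ ≠ 0 := norm_ne_zero_iff.mpr (hX0 u hu)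
  have hsd : DifferentiableAt ℝ (fun v => (⟪X v, N v⟫ : ℝ)) u := hXd.inner ℝ hNd
  have hgd : DifferentiableAt ℝ (fun v => (-(⟪X v, N v⟫ : ℝ))⁻¹) u := hsd.neg.inv hns0
  have hFd : DifferentiableAt ℝ (fun v => (-(⟪X v, N v⟫ : ℝ))⁻¹ • N v) u := hgd.smul hNd
  -- the product rule for the derivative of X* = g • N
  have hD : ∀ α : Fin m, pderiv' (fun v => (-(⟪X v, N v⟫ : ℝ))⁻¹ • N v) u α
      = (-(⟪X u, N u⟫ : ℝ))⁻¹ • pderiv' N u α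
        + (fderiv ℝ (fun v => (-(⟪X v, N v⟫ : ℝ))⁻¹) u (EuclideanSpace.single α 1)) • N u := by
    intro α
    rw [pderiv', fderiv_fun_smul hgd hNd]
    simp [pderiv']
  -- ⟪X, ∂X*⟫ = 0
  have hconst : (fun v => (⟪X v, (-(⟪X v, N v⟫ : ℝ))⁻¹ • N v⟫ : ℝ))
      =ᶠ[nhds u] fun _ => (-1 : ℝ) := by
    filter_upwards [hmem] with v hv
    have hv0 : (⟪X v, N v⟫ : ℝ) ≠ 0 := ne_of_lt (hneg v hv)
    rw [real_inner_smul_right, inv_neg, neg_mul, inv_mul_cancel₀ hv0]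
  have hfd0 : fderiv ℝ (fun v => (⟪X v, (-(⟪X v, N v⟫ : ℝ))⁻¹ • N v⟫ : ℝ)) u = 0 := by
    rw [hconst.fderiv_eq]
    exact fderiv_const_apply _
  have hXvD : ∀ α : Fin m,
      (⟪X u, pderiv' (fun v => (-(⟪X v, N v⟫ : ℝ))⁻¹ • N v) u α⟫ : ℝ) = 0 := by
    intro α
    have h2 := fderiv_inner_apply (𝕜 := ℝ) hXd hFd (EuclideanSpace.single α 1)
    rw [hfd0] at h2
    have h3 : (⟪fderiv ℝ X u (EuclideanSpace.single α 1),
        (-(⟪X u, N u⟫ : ℝ))⁻¹ • N u⟫ : ℝ) = 0 := by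
      rw [real_inner_smul_right]
      have h4 : (⟪fderiv ℝ X u (EuclideanSpace.single α 1), N u⟫ : ℝ) = 0 := by
        rw [real_inner_comm]; exact hOrth u hu α
      rw [h4, mul_zero]
    rw [h3, add_zero] at h2
    simpa [pderiv'] using h2.symm
  have hXvXs : (⟪X u, (-(⟪X u, N u⟫ : ℝ))⁻¹ • N u⟫ : ℝ) = -1 := by
    rw [real_inner_smul_right, inv_neg, neg_mul, inv_mul_cancel₀ hs0]
  have hq : (⟪(-(⟪X u, N u⟫ : ℝ))⁻¹ • N u, ‖X u‖⁻¹ • X u⟫ : ℝ)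
      * (⟪X u, ‖X u‖⁻¹ • X u⟫ : ℝ) = -1 := by
    have e1 : (⟪N u, X u⟫ : ℝ) = ⟪X u, N u⟫ := real_inner_comm _ _
    have e2 : (⟪X u, X u⟫ : ℝ) = ‖X u‖ * ‖X u‖ := real_inner_self_eq_norm_mul_norm _
    rw [real_inner_smul_left, real_inner_smul_right, real_inner_smul_right, e1, e2, inv_neg]
    have key : ∀ a r : ℝ, a ≠ 0 → r ≠ 0 →
        -a⁻¹ * (r⁻¹ * a) * (r⁻¹ * (r * r)) = -1 := by
      intro a r ha hr; field_simp
    exact key _ _ hs0 hr0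
  exact det_key (X u) (N u) _ _ _ _ (⟪X u, N u⟫ : ℝ) _ hs0 rfl hD hXvD hXvXs hq
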